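/- Let m ≥ 2 be an integer and define A : (0,∞) → ℝ by A(s) = (∫₀^s (sinh t)^(m-1) dt)/(sinh s)^(m-1). Then, as s → 0⁺, A(s) = (s/m)·(1 − ((m−1)/(3(m+2)))·s²) + O(s⁵); that is, the function s ↦ A(s) − (s/m) + ((m−1)/(3m(m+2)))·s³ is O(s⁵) as s → 0⁺. -/

import Mathlib

open Filter Topology Asymptotics


lemma sinh_taylor {t : ℝ} (h0 : 0 ≤ t) (h1 : t ≤ 1) :
    |Real.sinh t - t - t ^ 3 / 6| ≤ t ^ 5 := by
  have ht : |t| ≤ 1 := by rw [abs_of_nonneg h0]; exact h1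
  have ht' : |(-t)| ≤ 1 := by rwa [abs_neg]
  have b1 := Real.exp_bound ht (n := 5) (by norm_num)
  have b2 := Real.exp_bound ht' (n := 5) (by norm_num)
  have e1 : ∑ m ∈ Finset.range 5, t ^ m / m.factorial
      = 1 + t + t^2/2 + t^3/6 + t^4/24 := by
    simp [Finset.sum_range_succ, Nat.factorial]; try ring
  have e2 : ∑ m ∈ Finset.range 5, (-t) ^ m / m.factorial
      = 1 - t + t^2/2 - t^3/6 + t^4/24 := by
    simp [Finset.sum_range_succ, Nat.factorial]; try ring
  rw [e1, abs_of_nonneg h0] at b1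
  rw [e2, abs_neg, abs_of_nonneg h0] at b2
  rw [abs_le] at b1 b2 ⊢
  obtain ⟨b1l, b1r⟩ := b1
  obtain ⟨b2l, b2r⟩ := b2
  rw [Real.sinh_eq]
  norm_num [Nat.factorial] at b1l b1r b2l b2r
  constructor <;> nlinarith [pow_nonneg h0 5]

lemma cosh_taylor {t : ℝ} (h0 : 0 ≤ t) (h1 : t ≤ 1) :
    |Real.cosh t - 1 - t ^ 2 / 2| ≤ t ^ 4 := by
  have ht : |t| ≤ 1 := by rw [abs_of_nonneg h0]; exact h1
  have ht' : |(-t)| ≤ 1 := by rwa [abs_neg]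
  have b1 := Real.exp_bound ht (n := 4) (by norm_num)
  have b2 := Real.exp_bound ht' (n := 4) (by norm_num)
  have e1 : ∑ m ∈ Finset.range 4, t ^ m / m.factorial
      = 1 + t + t^2/2 + t^3/6 := by
    simp [Finset.sum_range_succ, Nat.factorial]; try ring
  have e2 : ∑ m ∈ Finset.range 4, (-t) ^ m / m.factorial
      = 1 - t + t^2/2 - t^3/6 := by
    simp [Finset.sum_range_succ, Nat.factorial]; try ring
  rw [e1, abs_of_nonneg h0] at b1
  rw [e2, abs_neg, abs_of_nonneg h0] at b2
  rw [abs_le] at b1 b2 ⊢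
  obtain ⟨b1l, b1r⟩ := b1
  obtain ⟨b2l, b2r⟩ := b2
  rw [Real.cosh_eq]
  norm_num [Nat.factorial] at b1l b1r b2l b2r
  constructor <;> nlinarith [pow_nonneg h0 4]



lemma q_identity (M c t : ℝ) (hM : 2 ≤ M) (hc : c = (M-1)/(3*M*(M+2))) :
    Real.sinh t * ((M-1)/M + 3*c*t^2) - (M-1)*(t/M - c*t^3)*Real.cosh t
    = (c*M/2)*t^5 + (Real.sinh t - t - t^3/6)*((M-1)/M + 3*c*t^2)
      + ((M-1)*c*t^3 - ((M-1)/M)*t)*(Real.cosh t - 1 - t^2/2) := by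
  have hM0 : M ≠ 0 := by linarith
  have hM2 : M + 2 ≠ 0 := by linarith
  subst hc
  field_simp
  ring

lemma q_bound (M c : ℝ) (hM : 2 ≤ M) (hc : c = (M-1)/(3*M*(M+2))) {t : ℝ}
    (h0 : 0 ≤ t) (h1 : t ≤ 1) :
    |Real.sinh t * ((M-1)/M + 3*c*t^2) - (M-1)*(t/M - c*t^3)*Real.cosh t| ≤ 3 * t^5 := by
  have hM0 : (0:ℝ) < M := by linarith
  have hM1 : (0:ℝ) ≤ M - 1 := by linarith
  have hc0 : 0 ≤ c := by rw [hc]; positivity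
  have hc2 : c ≤ 1/12 := by
    rw [hc, div_le_div_iff₀ (by positivity) (by norm_num)]; nlinarith
  have hc3 : (M-1)*c ≤ 1/3 := by
    rw [hc, mul_div_assoc']
    rw [div_le_div_iff₀ (by positivity) (by norm_num)]
    nlinarith
  have hc4 : M*c ≤ 1/3 := by
    rw [hc, mul_div_assoc']
    rw [div_le_div_iff₀ (by positivity) (by norm_num)]
    nlinarith
  have ha1 : (M-1)/M ≤ 1 := by
    rw [div_le_one hM0]; linarith
  have ha0 : 0 ≤ (M-1)/M := by positivity
  have hE1 := sinh_taylor h0 h1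
  have hE2 := cosh_taylor h0 h1
  rw [q_identity M c t hM hc]
  have tri := abs_add_three ((c*M/2)*t^5)
    ((Real.sinh t - t - t^3/6)*((M-1)/M + 3*c*t^2))
    (((M-1)*c*t^3 - ((M-1)/M)*t)*(Real.cosh t - 1 - t^2/2))
  refine tri.trans ?_
  rw [abs_mul, abs_mul, abs_mul]
  have ht3 : t^3 ≤ t := by nlinarith
  have ht5 : (0:ℝ) ≤ t^5 := by positivity
  have b1 : |c*M/2| * |t^5| ≤ (1/6) * t^5 := by
    rw [abs_of_nonneg (by positivity), abs_of_nonneg ht5]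
    nlinarith [mul_comm c M]
  have b2 : |Real.sinh t - t - t^3/6| * |(M-1)/M + 3*c*t^2| ≤ t^5 * (5/4) := by
    have hb : |(M-1)/M + 3*c*t^2| ≤ 5/4 := by
      rw [abs_of_nonneg (by positivity)]
      nlinarith [sq_nonneg t]
    exact mul_le_mul hE1 hb (abs_nonneg _) ht5
  have b3 : |(M-1)*c*t^3 - ((M-1)/M)*t| * |Real.cosh t - 1 - t^2/2| ≤ ((4/3)*t) * t^4 := by
    have hb : |(M-1)*c*t^3 - ((M-1)/M)*t| ≤ (4/3)*t := by
      rw [abs_sub_comm, abs_le]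
      constructor <;> nlinarith [mul_nonneg (mul_nonneg hM1 hc0) (pow_nonneg h0 3),
        mul_nonneg ha0 h0, mul_le_mul_of_nonneg_right ht3 (mul_nonneg hM1 hc0)]
    exact mul_le_mul hb hE2 (abs_nonneg _) (by positivity)
  nlinarith [b1, b2, b3]

lemma sinh_upper {t : ℝ} (h0 : 0 ≤ t) (h1 : t ≤ 1) : Real.sinh t ≤ 3 * t := by
  have h := (abs_le.1 (sinh_taylor h0 h1)).2
  nlinarith [pow_le_pow_of_le_one h0 h1 (show 1 ≤ 3 by norm_num),
    pow_le_pow_of_le_one h0 h1 (show 1 ≤ 5 by norm_num), pow_one t]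

theorem stmt_12 (m : ℕ) (hm : 2 ≤ m) (A : ℝ → ℝ)
    (hA : ∀ s : ℝ, 0 < s → A s =
      (∫ t in (0:ℝ)..s, Real.sinh t ^ (m - 1)) / Real.sinh s ^ (m - 1)) :
    (fun s : ℝ => A s - s / (m : ℝ) + (((m : ℝ) - 1) / (3 * (m : ℝ) * ((m : ℝ) + 2))) * s ^ 3)
      =O[𝓝[>] (0:ℝ)] fun s : ℝ => s ^ 5 := by
  set M : ℝ := (m : ℝ) with hMdef
  have hM : 2 ≤ M := by rw [hMdef]; exact_mod_cast hm
  have hM0 : (0:ℝ) < M := by linarith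
  set c : ℝ := (M - 1) / (3 * M * (M + 2)) with hcdef
  have hcast : ((m - 1 : ℕ) : ℝ) = M - 1 := by
    rw [hMdef]; push_cast [Nat.cast_sub (by omega : 1 ≤ m)]; ring
  -- derivative of the comparison function
  set g : ℝ → ℝ := fun t => (t / M - c * t ^ 3) * Real.sinh t ^ (m - 1) with hgdef
  set g' : ℝ → ℝ := fun t => (1 / M - 3 * c * t ^ 2) * Real.sinh t ^ (m - 1)
    + (t / M - c * t ^ 3) * ((M - 1) * Real.sinh t ^ (m - 2) * Real.cosh t) with hg'def
  have hderiv : ∀ t : ℝ, HasDerivAt g (g' t) t := by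
    intro t
    have hP : HasDerivAt (fun x : ℝ => x / M - c * x ^ 3) (1 / M - 3 * c * t ^ 2) t := by
      have h1 := ((hasDerivAt_id t).div_const M).sub ((hasDerivAt_pow 3 t).const_mul c)
      exact h1.congr_deriv (by norm_num; ring)
    have hS : HasDerivAt (fun x : ℝ => Real.sinh x ^ (m - 1))
        ((M - 1) * Real.sinh t ^ (m - 2) * Real.cosh t) t := by
      have h2 := (Real.hasDerivAt_sinh t).pow (m - 1)
      have e : m - 1 - 1 = m - 2 := by omega
      rw [e, hcast] at h2
      exact h2
    exact hP.mul hS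
  have hg'cont : Continuous g' := by
    rw [hg'def]; fun_prop
  have hrcont : Continuous (fun t : ℝ => Real.sinh t ^ (m - 1) - g' t) := by
    fun_prop
  -- the key pointwise bound on (0,1]
  have key : ∀ s : ℝ, s ∈ Set.Ioo (0:ℝ) 1 →
      |A s - s / M + c * s ^ 3| ≤ (3 * 3 ^ (m - 2)) * |s ^ 5| := by
    intro s hs
    obtain ⟨hs0, hs1⟩ := hs
    have hs1' : s ≤ 1 := le_of_lt hs1
    have hsinh_pos : 0 < Real.sinh s := Real.sinh_pos_iff.2 hs0
    have hG : 0 < Real.sinh s ^ (m - 1) := pow_pos hsinh_pos _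
    -- FTC
    have hFTC : ∫ t in (0:ℝ)..s, g' t = g s := by
      have := intervalIntegral.integral_eq_sub_of_hasDerivAt
        (f := g) (f' := g') (a := 0) (b := s)
        (fun t _ => hderiv t) (hg'cont.intervalIntegrable 0 s)
      simpa [hgdef] using this
    have hsplit : (∫ t in (0:ℝ)..s, Real.sinh t ^ (m - 1)) - g s
        = ∫ t in (0:ℝ)..s, (Real.sinh t ^ (m - 1) - g' t) := by
      rw [intervalIntegral.integral_sub
        ((by fun_prop : Continuous fun t : ℝ => Real.sinh t ^ (m-1)).intervalIntegrable 0 s)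
        (hg'cont.intervalIntegrable 0 s), hFTC]
    -- bound |r t| ≤ 3^(m-2) * 3 * t^(m+3) on [0, s]
    have hrbound : ∀ t ∈ Set.Icc (0:ℝ) s,
        |Real.sinh t ^ (m - 1) - g' t| ≤ (3 * 3 ^ (m - 2)) * t ^ (m + 3) := by
      intro t ht
      obtain ⟨ht0, hts⟩ := ht
      have ht1 : t ≤ 1 := le_trans hts hs1'
      have hsinh0 : 0 ≤ Real.sinh t := Real.sinh_nonneg_iff.2 ht0
      have hfact : Real.sinh t ^ (m - 1) - g' t
          = Real.sinh t ^ (m - 2) *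
            (Real.sinh t * ((M-1)/M + 3*c*t^2) - (M-1)*(t/M - c*t^3)*Real.cosh t) := by
        have e : m - 1 = (m - 2) + 1 := by omega
        rw [hg'def]
        simp only [e, pow_succ]
        have hM0' : M ≠ 0 := ne_of_gt hM0
        field_simp
        ring
      rw [hfact, abs_mul]
      have h1 : |Real.sinh t ^ (m - 2)| ≤ (3 * t) ^ (m - 2) := by
        rw [abs_of_nonneg (pow_nonneg hsinh0 _)]
        exact pow_le_pow_left₀ hsinh0 (sinh_upper ht0 ht1) _
      have h2 := q_bound M c hM hcdef ht0 ht1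
      calc |Real.sinh t ^ (m - 2)| *
            |Real.sinh t * ((M-1)/M + 3*c*t^2) - (M-1)*(t/M - c*t^3)*Real.cosh t|
          ≤ (3 * t) ^ (m - 2) * (3 * t ^ 5) := by
            exact mul_le_mul h1 h2 (abs_nonneg _) (by positivity)
        _ ≤ (3 * 3 ^ (m - 2)) * t ^ (m + 3) := by
            rw [mul_pow]
            have e : m + 3 = (m - 2) + 5 := by omega
            rw [e, pow_add]
            ring_nf
            nlinarith [pow_nonneg ht0 (m-2), pow_nonneg ht0 5,
              pow_pos (show (0:ℝ) < 3 by norm_num) (m-2)]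
      -- fallback; may be removed
    -- integrate the bound
    have hint : |∫ t in (0:ℝ)..s, (Real.sinh t ^ (m - 1) - g' t)|
        ≤ (3 * 3 ^ (m - 2)) * s ^ (m + 4) := by
      have h1 : |∫ t in (0:ℝ)..s, (Real.sinh t ^ (m - 1) - g' t)|
          ≤ ∫ t in (0:ℝ)..s, |Real.sinh t ^ (m - 1) - g' t| :=
        intervalIntegral.abs_integral_le_integral_abs (le_of_lt hs0)
      have h2 : (∫ t in (0:ℝ)..s, |Real.sinh t ^ (m - 1) - g' t|)
          ≤ ∫ t in (0:ℝ)..s, (3 * 3 ^ (m - 2)) * t ^ (m + 3) := by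
        apply intervalIntegral.integral_mono_on (le_of_lt hs0)
        · exact (hrcont.abs).intervalIntegrable 0 s
        · exact (by fun_prop : Continuous fun t : ℝ =>
            (3 * 3 ^ (m - 2) : ℝ) * t ^ (m + 3)).intervalIntegrable 0 s
        · exact hrbound
      have h3 : (∫ t in (0:ℝ)..s, (3 * 3 ^ (m - 2) : ℝ) * t ^ (m + 3))
          = (3 * 3 ^ (m - 2)) * (s ^ (m + 4) / (m + 4)) := by
        rw [intervalIntegral.integral_const_mul, integral_pow]
        norm_num
        rw [show ((m:ℝ)+3+1) = (m:ℝ)+4 from by ring]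
      have h4 : (3 * 3 ^ (m - 2) : ℝ) * (s ^ (m + 4) / (m + 4))
          ≤ (3 * 3 ^ (m - 2)) * s ^ (m + 4) := by
        apply mul_le_mul_of_nonneg_left _ (by positivity)
        apply div_le_self (by positivity)
        have : (1:ℝ) ≤ (m:ℝ) + 4 := by
          have : (0:ℝ) ≤ (m:ℝ) := Nat.cast_nonneg m
          linarith
        exact_mod_cast this
      linarith
    -- assemble
    have hval : A s - s / M + c * s ^ 3
        = ((∫ t in (0:ℝ)..s, Real.sinh t ^ (m - 1)) - g s) / Real.sinh s ^ (m - 1) := by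
      rw [hA s hs0, hgdef]
      field_simp
      ring
    rw [hval, hsplit, abs_div, abs_of_nonneg (le_of_lt hG)]
    have hGlow : s ^ (m - 1) ≤ Real.sinh s ^ (m - 1) :=
      pow_le_pow_left₀ (le_of_lt hs0) (le_of_lt (Real.self_lt_sinh_iff.2 hs0)) _
    have hspow : (0:ℝ) < s ^ (m - 1) := pow_pos hs0 _
    calc |∫ t in (0:ℝ)..s, (Real.sinh t ^ (m - 1) - g' t)| / Real.sinh s ^ (m - 1)
        ≤ |∫ t in (0:ℝ)..s, (Real.sinh t ^ (m - 1) - g' t)| / s ^ (m - 1) := by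
          gcongr
      _ ≤ ((3 * 3 ^ (m - 2)) * s ^ (m + 4)) / s ^ (m - 1) := by
          gcongr
      _ = (3 * 3 ^ (m - 2)) * |s ^ 5| := by
          have e : m + 4 = 5 + (m - 1) := by omega
          rw [e, pow_add, abs_of_nonneg (by positivity : (0:ℝ) ≤ s ^ 5)]
          field_simp
  refine IsBigO.of_bound (3 * 3 ^ (m - 2)) ?_
  have hmem : Set.Ioo (0:ℝ) 1 ∈ 𝓝[>] (0:ℝ) := Ioo_mem_nhdsGT_of_mem (by norm_num)
  filter_upwards [hmem] with s hs
  simpa [Real.norm_eq_abs] using key s hs
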